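/- Let C be a nonempty closed convex subset of a real Hilbert space H and T a κ-strict pseudo-contraction of C into itself with 0 ≤ κ < 1 and F(T) ≠ ∅. Fix x ∈ C and α ∈ (0,1], set y = (1−α)x + αTx. If u ∈ C satisfies ‖y − u‖² ≤ ‖x − u‖² + α(κ − (1−α))‖x − Tx‖², then ‖x − Tx‖ ≤ (2/(1−κ))‖x − u‖. -/

import Mathlib

theorem strict_pseudo_contraction_Cx_subset
    {H : Type*} [NormedAddCommGroup H] [InnerProductSpace ℝ H] [CompleteSpace H]
    (C : Set H) (hC : IsClosed C) (hCconv : Convex ℝ C) (hCne : C.Nonempty)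
    (T : H → H) (hT : ∀ x ∈ C, T x ∈ C)
    (κ : ℝ) (hκ0 : 0 ≤ κ) (hκ1 : κ < 1)
    (hspc : ∀ x ∈ C, ∀ y ∈ C,
      ‖T x - T y‖ ^ 2 ≤ ‖x - y‖ ^ 2 + κ * ‖(x - T x) - (y - T y)‖ ^ 2)
    (hF : ∃ p ∈ C, T p = p)
    (x : H) (hx : x ∈ C) (α : ℝ) (hα0 : 0 < α) (hα1 : α ≤ 1)
    (y : H) (hy : y = (1 - α) • x + α • T x)
    (u : H) (hu : u ∈ C)
    (huC : ‖y - u‖ ^ 2 ≤ ‖x - u‖ ^ 2 + α * (κ - (1 - α)) * ‖x - T x‖ ^ 2) :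
    ‖x - T x‖ ≤ (2 / (1 - κ)) * ‖x - u‖ := by
  have hyu : y - u = (x - u) - α • (x - T x) := by
    rw [hy]; module
  have hexp : ‖y - u‖ ^ 2
      = ‖x - u‖ ^ 2 - 2 * inner ℝ (x - u) (α • (x - T x)) + α ^ 2 * ‖x - T x‖ ^ 2 := by
    rw [hyu, @norm_sub_sq_real, norm_smul, mul_pow]
    simp [abs_of_pos hα0]
  have hinner : inner ℝ (x - u) (α • (x - T x)) = α * inner ℝ (x - u) (x - T x) :=
    real_inner_smul_right _ _ _
  -- key: (1-κ) ‖x - Tx‖² ≤ 2 ⟪x-u, x-Tx⟫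
  have hkey : (1 - κ) * ‖x - T x‖ ^ 2 ≤ 2 * inner ℝ (x - u) (x - T x) := by
    rw [hexp, hinner] at huC
    nlinarith [huC, hα0]
  have hCS : (inner ℝ (x - u) (x - T x) : ℝ) ≤ ‖x - u‖ * ‖x - T x‖ :=
    real_inner_le_norm _ _
  rcases eq_or_lt_of_le (norm_nonneg (x - T x)) with h0 | h0
  · rw [← h0]
    have : (0:ℝ) < 1 - κ := by linarith
    positivity
  · have h2 : (1 - κ) * ‖x - T x‖ ^ 2 ≤ 2 * (‖x - u‖ * ‖x - T x‖) := by linarith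
    rw [div_mul_eq_mul_div, le_div_iff₀ (by linarith)]
    nlinarith [h2, h0]
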